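/- Nonexistence of positive solutions for λ < λ₁ with nonpositive superlinear coefficients (one-dimensional case, λ₁((0,1)) = π²): Let n ≥ 2 be a natural number, λ < π², and a : ℕ → ℝ with a i ≤ 0 for every i ∈ {2,…,n}. Suppose u : ℝ → ℝ is continuous on the closed interval [0,1], twice continuously differentiable on the open interval (0,1) (ContDiffOn ℝ 2 u (Ioo 0 1)), satisfies u(0) = 0, u(1) = 0, u(x) > 0 for all x ∈ (0,1), and −(deriv (deriv u)) x = λ u(x) + Σ_{i=2}^n a i · u(x)^i for all x ∈ (0,1). Then a contradiction follows (no such u exists). -/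

import Mathlib

open Set Real Filter Topology

/-- Nonexistence of positive solutions for `λ < λ₁((0,1)) = π²` with
nonpositive superlinear coefficients (one-dimensional case). -/
theorem no_positive_solution_of_lam_lt_lam1
    (n : ℕ) (hn : 2 ≤ n) (lam : ℝ) (hlam : lam < Real.pi ^ 2)
    (a : ℕ → ℝ) (ha : ∀ i ∈ Finset.Icc 2 n, a i ≤ 0)
    (u : ℝ → ℝ)
    (huc : ContinuousOn u (Icc 0 1))
    (hud : ContDiffOn ℝ 2 u (Ioo 0 1))
    (hu0 : u 0 = 0) (hu1 : u 1 = 0)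
    (hupos : ∀ x ∈ Ioo (0 : ℝ) 1, 0 < u x)
    (heq : ∀ x ∈ Ioo (0 : ℝ) 1,
      -(deriv (deriv u) x) = lam * u x + ∑ i ∈ Finset.Icc 2 n, a i * u x ^ i) :
    False := by
  set s : Set ℝ := Ioo (0:ℝ) 1 with hs
  have hsIcc : s ⊆ Icc 0 1 := Ioo_subset_Icc_self
  -- differentiability facts
  have d2 : ∀ x ∈ s, HasDerivAt (deriv u) (deriv (deriv u) x) x := by
    intro x hx
    have h1 : ContDiffOn ℝ 1 (deriv u) s := hud.deriv_of_isOpen isOpen_Ioo le_rfl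
    exact ((h1.contDiffAt (isOpen_Ioo.mem_nhds hx)).differentiableAt one_ne_zero).hasDerivAt
  have d1 : ∀ x ∈ s, HasDerivAt u (deriv u x) x := by
    intro x hx
    exact (((hud.contDiffAt (isOpen_Ioo.mem_nhds hx)).differentiableAt
      (by norm_num)).hasDerivAt)
  -- the Wronskian
  set W : ℝ → ℝ := fun x => deriv u x * Real.sin (π * x) - u x * (π * Real.cos (π * x))
    with hWdef
  have hsin : ∀ x : ℝ, HasDerivAt (fun y => Real.sin (π * y)) (Real.cos (π * x) * π) x := by
    intro x
    have h0 : HasDerivAt (fun y : ℝ => π * y) π x := by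
      simpa using (hasDerivAt_id x).const_mul π
    exact (Real.hasDerivAt_sin (π * x)).comp x h0
  have hcos : ∀ x : ℝ, HasDerivAt (fun y => Real.cos (π * y)) (-Real.sin (π * x) * π) x := by
    intro x
    have h0 : HasDerivAt (fun y : ℝ => π * y) π x := by
      simpa using (hasDerivAt_id x).const_mul π
    exact ((Real.hasDerivAt_cos (π * x)).comp x h0).congr_deriv (by ring)
  have hW : ∀ x ∈ s, HasDerivAt W
      ((deriv (deriv u) x + π ^ 2 * u x) * Real.sin (π * x)) x := by
    intro x hx
    have h1 := ((d2 x hx).mul (hsin x)).sub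
      ((d1 x hx).mul (((hcos x).const_mul π)))
    exact h1.congr_deriv (by ring)
  -- derivative of W is positive on s
  have hWpos : ∀ x ∈ s, 0 < (deriv (deriv u) x + π ^ 2 * u x) * Real.sin (π * x) := by
    intro x hx
    have hsinpos : 0 < Real.sin (π * x) := by
      apply Real.sin_pos_of_pos_of_lt_pi
      · exact mul_pos pi_pos hx.1
      · nlinarith [pi_pos, hx.2]
    have hS : (∑ i ∈ Finset.Icc 2 n, a i * u x ^ i) ≤ 0 := by
      apply Finset.sum_nonpos
      intro i hi
      exact mul_nonpos_of_nonpos_of_nonneg (ha i hi) (pow_nonneg (hupos x hx).le i)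
    have h2 := heq x hx
    have hux := hupos x hx
    have : deriv (deriv u) x + π ^ 2 * u x ≥ (π ^ 2 - lam) * u x := by nlinarith
    nlinarith [mul_pos (mul_pos (sub_pos.mpr hlam) hux) hsinpos]
  have hmono : StrictMonoOn W s := by
    apply strictMonoOn_of_deriv_pos (convex_Ioo 0 1)
    · exact fun x hx => ((hW x hx).continuousAt).continuousWithinAt
    · intro x hx
      rw [interior_Ioo] at hx
      rw [(hW x hx).deriv]
      exact hWpos x hx
  -- bound on u
  obtain ⟨M, hM⟩ := isCompact_Icc.exists_bound_of_continuousOn huc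
  have hM0 : 0 ≤ M := le_trans (norm_nonneg _) (hM 0 (by norm_num))
  -- bound on u''
  set K : ℝ := |lam| * M + ∑ i ∈ Finset.Icc 2 n, |a i| * M ^ i with hKdef
  have hK0 : 0 ≤ K := by
    apply add_nonneg (mul_nonneg (abs_nonneg _) hM0)
    exact Finset.sum_nonneg fun i _ => mul_nonneg (abs_nonneg _) (pow_nonneg hM0 i)
  have hK : ∀ x ∈ s, ‖deriv (deriv u) x‖ ≤ K := by
    intro x hx
    have h2 := heq x hx
    have hux : |u x| ≤ M := hM x (hsIcc hx)
    have : deriv (deriv u) x = -(lam * u x + ∑ i ∈ Finset.Icc 2 n, a i * u x ^ i) := by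
      linarith
    rw [Real.norm_eq_abs, this, abs_neg]
    calc |lam * u x + ∑ i ∈ Finset.Icc 2 n, a i * u x ^ i|
        ≤ |lam * u x| + |∑ i ∈ Finset.Icc 2 n, a i * u x ^ i| := abs_add_le _ _
      _ ≤ |lam| * M + ∑ i ∈ Finset.Icc 2 n, |a i| * M ^ i := by
          apply add_le_add
          · rw [abs_mul]
            exact mul_le_mul_of_nonneg_left hux (abs_nonneg _)
          · refine le_trans (Finset.abs_sum_le_sum_abs _ _) (Finset.sum_le_sum ?_)
            intro i _
            rw [abs_mul, abs_pow]
            exact mul_le_mul_of_nonneg_left (pow_le_pow_left₀ (abs_nonneg _) hux i)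
              (abs_nonneg _)
  -- bound on u'
  set C : ℝ := |deriv u (1/2)| + K with hCdef
  have hhalf : (1/2 : ℝ) ∈ s := by constructor <;> norm_num
  have hC : ∀ x ∈ s, |deriv u x| ≤ C := by
    intro x hx
    have := (convex_Ioo (0:ℝ) 1).norm_image_sub_le_of_norm_deriv_le
      (fun y hy => (d2 y hy).differentiableAt) hK hhalf hx
    have hdist : ‖x - 1/2‖ ≤ 1 := by
      rw [Real.norm_eq_abs]
      rw [abs_le]; constructor <;> [linarith [hx.1]; linarith [hx.2]]
    have h3 : ‖deriv u x - deriv u (1/2)‖ ≤ K := by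
      calc ‖deriv u x - deriv u (1/2)‖ ≤ K * ‖x - 1/2‖ := this
        _ ≤ K * 1 := mul_le_mul_of_nonneg_left hdist hK0
        _ = K := mul_one K
    rw [Real.norm_eq_abs] at h3
    calc |deriv u x| = |deriv u (1/2) + (deriv u x - deriv u (1/2))| := by ring_nf
      _ ≤ |deriv u (1/2)| + |deriv u x - deriv u (1/2)| := abs_add_le _ _
      _ ≤ C := by rw [hCdef]; linarith
  have hC0 : 0 ≤ C := le_trans (abs_nonneg _) (hC _ hhalf)
  -- limits of W at the endpoints
  have limW : ∀ z : ℝ, z ∈ Icc (0:ℝ) 1 → u z = 0 → Tendsto W (𝓝[s] z) (𝓝 0) := by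
    intro z hz huz
    have hu_t : Tendsto u (𝓝[s] z) (𝓝 0) := by
      have := (huc z hz).tendsto
      rw [huz] at this
      exact this.mono_left (nhdsWithin_mono _ hsIcc)
    have hterm2 : Tendsto (fun x => u x * (π * Real.cos (π * x))) (𝓝[s] z)
        (𝓝 (0 * (π * Real.cos (π * z)))) := by
      have hc : Continuous fun x : ℝ => π * Real.cos (π * x) :=
        continuous_const.mul (Real.continuous_cos.comp (continuous_const.mul continuous_id))
      exact hu_t.mul ((hc.tendsto z).mono_left nhdsWithin_le_nhds)
    rw [zero_mul] at hterm2
    have hsinz : Real.sin (π * z) = 0 := by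
      rcases hz.1.lt_or_eq with h | h
      · rcases hz.2.lt_or_eq with h2 | h2
        · exfalso
          have := hupos z ⟨h, h2⟩
          rw [huz] at this; exact lt_irrefl 0 this
        · rw [h2]; simp [Real.sin_pi]
      · rw [← h]; simp
    have hterm1 : Tendsto (fun x => deriv u x * Real.sin (π * x)) (𝓝[s] z) (𝓝 0) := by
      apply squeeze_zero_norm' (a := fun x => C * |Real.sin (π * x)|)
      · filter_upwards [self_mem_nhdsWithin] with x hx
        rw [Real.norm_eq_abs, abs_mul]
        exact mul_le_mul_of_nonneg_right (hC x hx) (abs_nonneg _)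
      · have : Tendsto (fun x : ℝ => C * |Real.sin (π * x)|) (𝓝 z)
            (𝓝 (C * |Real.sin (π * z)|)) := by
          have hc : Continuous fun x : ℝ => C * |Real.sin (π * x)| :=
            continuous_const.mul ((Real.continuous_sin.comp
              (continuous_const.mul continuous_id)).abs)
          exact hc.tendsto z
        rw [hsinz, abs_zero, mul_zero] at this
        exact this.mono_left nhdsWithin_le_nhds
    have := hterm1.sub hterm2
    rw [sub_zero] at this
    exact this
  haveI hne0 : (𝓝[s] (0:ℝ)).NeBot := by
    apply mem_closure_iff_nhdsWithin_neBot.mp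
    rw [hs, closure_Ioo (by norm_num : (0:ℝ) ≠ 1)]
    norm_num
  haveI hne1 : (𝓝[s] (1:ℝ)).NeBot := by
    apply mem_closure_iff_nhdsWithin_neBot.mp
    rw [hs, closure_Ioo (by norm_num : (0:ℝ) ≠ 1)]
    norm_num
  have hquarter : (1/4 : ℝ) ∈ s := by constructor <;> norm_num
  -- 0 ≤ W (1/4)
  have h14 : 0 ≤ W (1/4) := by
    apply le_of_tendsto (limW 0 (by norm_num) hu0)
    have hev : ∀ᶠ x in 𝓝[s] (0:ℝ), x < 1/4 := by
      apply eventually_nhdsWithin_of_eventually_nhds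
      exact eventually_lt_nhds (by norm_num)
    filter_upwards [self_mem_nhdsWithin, hev] with x hx hlt
    exact (hmono hx hquarter hlt).le
  -- W (1/2) ≤ 0
  have h12 : W (1/2) ≤ 0 := by
    apply ge_of_tendsto (limW 1 (by norm_num) hu1)
    have hev : ∀ᶠ x in 𝓝[s] (1:ℝ), 1/2 < x := by
      apply eventually_nhdsWithin_of_eventually_nhds
      exact eventually_gt_nhds (by norm_num)
    filter_upwards [self_mem_nhdsWithin, hev] with x hx hlt
    exact (hmono hhalf hx hlt).le
  have := hmono hquarter hhalf (by norm_num)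
  linarith
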